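/- With α and β as in the concrete matched pair example, for nearly all (g,h,s) one has β_s(g+h) = β_{α_h(s)}(g) + β_s(h): concretely, for g, h ∈ ℝ and s = (a,b) ∈ H with all relevant denominators nonzero, β_{(a,b)}(g+h) = β_{α_h(a,b)}(g) + β_{(a,b)}(h). -/

import Mathlib

/-- α_x(a,b) = (a+bx, b) if a+bx > 0 and (-(a+bx), -b) if a+bx < 0. -/
noncomputable def alpha (x : ℝ) (p : ℝ × ℝ) : ℝ × ℝ :=
  if 0 < p.1 + p.2 * x then (p.1 + p.2 * x, p.2) else (-(p.1 + p.2 * x), -p.2)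

/-- β_{(a,b)}(x) = x/(a(a+bx)). -/
noncomputable def beta (p : ℝ × ℝ) (x : ℝ) : ℝ := x / (p.1 * (p.1 + p.2 * x))

/-- β_s(g+h) = β_{α_h(s)}(g) + β_s(h) wherever everything is defined. -/
theorem beta_matched (g h a b : ℝ) (ha : 0 < a)
    (h1 : a + b * h ≠ 0) (h2 : a + b * (g + h) ≠ 0) :
    beta (a, b) (g + h) = beta (alpha h (a, b)) g + beta (a, b) h := by
  have h3 : a + b * h + b * g ≠ 0 := by
    intro e; apply h2; linarith [e]
  simp only [beta, alpha]
  split <;> simp only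
  · field_simp [show a + (g + h) * b ≠ 0 by contrapose! h2; linarith, show a + h * b + g * b ≠ 0 by contrapose! h3; linarith, show a + h * b ≠ 0 by contrapose! h1; linarith]
    ring
  · rw [show -(a + b * h) * (-(a + b * h) + -b * g) = (a + b * h) * (a + b * h + b * g) by ring]
    field_simp [show a + (g + h) * b ≠ 0 by contrapose! h2; linarith, show a + h * b + g * b ≠ 0 by contrapose! h3; linarith, show a + h * b ≠ 0 by contrapose! h1; linarith]
    ring
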